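/- arXiv:1802.00867 — 6 statements merged into one kernel-verified Lean document; each statement's English description precedes it below -/
import Mathlib

section
/- Let G be an ω-narrow semitopological group acting separately continuously and transitively on a Baire space X via θ : G × X → X. Then for every x ∈ X the orbit map θ^x : G → X, g ↦ θ(g,x), is a skeletal map; that is, for every nonempty open set U ⊆ G, the closure of θ^x(U) in X has nonempty interior. -/
open Pointwise

/-- For a separately continuous transitive action of an ω-narrow
semitopological group `G` on a Baire space `X`, every orbit map `g ↦ θ g x` is skeletal. -/
theorem orbitMap_skeletal {G X : Type*} [Group G] [TopologicalSpace G] [TopologicalSpace X]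
    [BaireSpace X]
    -- `G` is a semitopological group: multiplication is separately continuous
    (hmul_left : ∀ g : G, Continuous fun h : G => g * h)
    (hmul_right : ∀ g : G, Continuous fun h : G => h * g)
    -- `G` is ω-narrow
    (hnarrow : ∀ U ∈ nhds (1 : G), ∃ A : Set G, A.Countable ∧ U * A = Set.univ ∧
      A * U = Set.univ)
    -- `θ` is an action
    (θ : G → X → X)
    (hone : ∀ x : X, θ 1 x = x)
    (hcomp : ∀ (g h : G) (x : X), θ (g * h) x = θ g (θ h x))
    -- `θ` is separately continuous
    (hsep₁ : ∀ g : G, Continuous (θ g))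
    (hsep₂ : ∀ x : X, Continuous fun g : G => θ g x)
    -- `θ` is transitive
    (htrans : ∀ x : X, Function.Surjective fun g : G => θ g x)
    (x : X) :
    ∀ U : Set G, IsOpen U → U.Nonempty →
      (interior (closure ((fun g : G => θ g x) '' U))).Nonempty := by
  intro U hU ⟨u, hu⟩
  -- each θ a is a homeomorphism of X
  let e : G → X ≃ₜ X := fun a =>
    { toFun := θ a
      invFun := θ a⁻¹
      left_inv := fun z => by rw [← hcomp, inv_mul_cancel, hone]
      right_inv := fun z => by rw [← hcomp, mul_inv_cancel, hone]
      continuous_toFun := hsep₁ a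
      continuous_invFun := hsep₁ a⁻¹ }
  set y := θ u x with hy
  set V : Set G := (fun h : G => h * u) ⁻¹' U with hV
  have hVopen : IsOpen V := hU.preimage (hmul_right u)
  have hVmem : V ∈ nhds (1 : G) := hVopen.mem_nhds (by simp [hV, hu])
  obtain ⟨A, hAc, -, hAV⟩ := hnarrow V hVmem
  set S : Set X := (fun g : G => θ g y) '' V with hS
  have : Countable ↥A := hAc.to_subtype
  -- the sets `closure (θ a '' S)`, `a ∈ A`, are a countable closed cover of X
  have hcover : ⋃ a : A, closure (θ (a : G) '' S) = Set.univ := by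
    refine Set.eq_univ_of_forall fun z => ?_
    obtain ⟨g, hg⟩ := htrans y z
    have hgmem : g ∈ A * V := by rw [hAV]; trivial
    obtain ⟨a, ha, v, hv, rfl⟩ := hgmem
    refine Set.mem_iUnion.2 ⟨⟨a, ha⟩, subset_closure ?_⟩
    exact ⟨θ v y, ⟨v, hv, rfl⟩, by rw [← hcomp]; exact hg⟩
  have : Nonempty X := ⟨x⟩
  obtain ⟨a, ha⟩ := nonempty_interior_of_iUnion_of_closed
    (f := fun a : A => closure (θ (a : G) '' S)) (fun a => isClosed_closure) hcover
  -- transfer the nonempty interior through the homeomorphism θ a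
  have h0 : θ (a : G) '' S = e a '' S := rfl
  rw [h0, ← (e a).image_closure, ← (e a).image_interior] at ha
  obtain ⟨z, hz⟩ := ha.of_image
  -- finally, S ⊆ θ^x '' U
  have hSsub : S ⊆ (fun g : G => θ g x) '' U := by
    rintro _ ⟨v, hv, rfl⟩
    exact ⟨v * u, hv, hcomp v u x⟩
  exact ⟨z, interior_mono (closure_mono hSsub) hz⟩
end

section
/- Let G be an ω-narrow semitopological group acting separately continuously and transitively on a Baire space X, and suppose x ∈ X and U is a neighborhood of the identity e in G. Then the closure of U·x = {g·x : g ∈ U} in X has nonempty interior. -/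
open Pointwise

/-- For a separately continuous transitive action of an ω-narrow
semitopological group `G` on a Baire space `X`, and any neighborhood `U` of the
identity, the closure of `U·x` has nonempty interior. -/
theorem closure_nhds_orbit_interior_nonempty {G X : Type*} [Group G] [TopologicalSpace G]
    [TopologicalSpace X] [BaireSpace X]
    (hmul_left : ∀ g : G, Continuous fun h : G => g * h)
    (hmul_right : ∀ g : G, Continuous fun h : G => h * g)
    (hnarrow : ∀ U ∈ nhds (1 : G), ∃ A : Set G, A.Countable ∧ U * A = Set.univ ∧
      A * U = Set.univ)
    (θ : G → X → X)
    (hone : ∀ x : X, θ 1 x = x)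
    (hcomp : ∀ (g h : G) (x : X), θ (g * h) x = θ g (θ h x))
    (hsep₁ : ∀ g : G, Continuous (θ g))
    (hsep₂ : ∀ x : X, Continuous fun g : G => θ g x)
    (htrans : ∀ x : X, Function.Surjective fun g : G => θ g x)
    (x : X) (U : Set G) (hU : U ∈ nhds (1 : G)) :
    (interior (closure ((fun g : G => θ g x) '' U))).Nonempty := by
  obtain ⟨A, hAc, -, hAU⟩ := hnarrow U hU
  set S := (fun g : G => θ g x) '' U with hS
  -- homeomorphism given by each group element
  let e : G → Homeomorph X X := fun g =>
    { toFun := θ g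
      invFun := θ g⁻¹
      left_inv := fun y => by rw [← hcomp, inv_mul_cancel, hone]
      right_inv := fun y => by rw [← hcomp, mul_inv_cancel, hone]
      continuous_toFun := hsep₁ g
      continuous_invFun := hsep₁ g⁻¹ }
  have hcover : ⋃ a : A, closure ((e a) '' S) = Set.univ := by
    apply Set.eq_univ_of_forall
    intro y
    obtain ⟨g, hg⟩ := htrans x y
    have hgmem : g ∈ A * U := by rw [hAU]; trivial
    obtain ⟨a, ha, u, hu, rfl⟩ := hgmem
    refine Set.mem_iUnion.2 ⟨⟨a, ha⟩, subset_closure ?_⟩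
    exact ⟨θ u x, ⟨u, hu, rfl⟩, by show θ a (θ u x) = _; rw [← hcomp]; exact hg⟩
  have : Countable A := hAc.to_subtype
  have : Nonempty X := ⟨x⟩
  obtain ⟨a, ha⟩ := nonempty_interior_of_iUnion_of_closed
    (fun a : A => isClosed_closure) hcover
  rw [← Homeomorph.image_closure, ← Homeomorph.image_interior] at ha
  exact ha.of_image
end

section
/- Let θ : G × X → X be a continuous action of an ω-narrow semitopological group G on a space X, and let Θ : G × C*(X) → C*(X) be the induced right action Θ(g,f) = f ∘ θ_g on the Banach space C*(X) of bounded continuous functions with the sup norm. If f ∈ C*(X) is right-uniformly continuous, then the orbit fG = {Θ(g,f) : g ∈ G} is a separable subset of C*(X). -/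
open Pointwise

/-- For a continuous action of an ω-narrow semitopological group `G` on `X`
and a right-uniformly continuous `f ∈ C*(X)`, the orbit `{f ∘ θ g : g ∈ G}` is a separable
subset of the Banach space of bounded continuous functions with the sup norm. -/
theorem orbit_separable {G X : Type*} [Group G] [TopologicalSpace G] [TopologicalSpace X]
    (hmul_left : ∀ g : G, Continuous fun h : G => g * h)
    (hmul_right : ∀ g : G, Continuous fun h : G => h * g)
    (hnarrow : ∀ U ∈ nhds (1 : G), ∃ A : Set G, A.Countable ∧ U * A = Set.univ ∧
      A * U = Set.univ)
    (θ : G → X → X)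
    (hone : ∀ x : X, θ 1 x = x)
    (hcomp : ∀ (g h : G) (x : X), θ (g * h) x = θ g (θ h x))
    (hcont : Continuous fun p : G × X => θ p.1 p.2)
    (Θ : G → BoundedContinuousFunction X ℝ → BoundedContinuousFunction X ℝ)
    (hΘ : ∀ (g : G) (f : BoundedContinuousFunction X ℝ) (x : X), Θ g f x = f (θ g x))
    (f : BoundedContinuousFunction X ℝ)
    -- `f` is right-uniformly continuous
    (hruc : ∀ ε > (0 : ℝ), ∃ O ∈ nhds (1 : G), ∀ g ∈ O, ∀ x : X, |f x - f (θ g x)| < ε) :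
    TopologicalSpace.IsSeparable (Set.range fun g : G => Θ g f) := by
  choose O hO hOo using fun n : ℕ => hruc (1/(n+1)) (by positivity)
  choose A hAc hOA hAO using fun n => hnarrow (O n) (hO n)
  refine ⟨⋃ n, (fun a => Θ a f) '' A n, Set.countable_iUnion fun n => (hAc n).image _, ?_⟩
  rintro _ ⟨g, rfl⟩
  rw [Metric.mem_closure_iff]
  intro ε hε
  obtain ⟨n, hn⟩ := exists_nat_one_div_lt hε
  have hg : g ∈ O n * A n := (hOA n).symm ▸ Set.mem_univ g
  obtain ⟨o, ho, a, ha, rfl⟩ := hg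
  refine ⟨Θ a f, Set.mem_iUnion.2 ⟨n, ⟨a, ha, rfl⟩⟩, ?_⟩
  have hd : dist (Θ (o * a) f) (Θ a f) ≤ 1/(n+1) := by
    rw [BoundedContinuousFunction.dist_le (by positivity)]
    intro x
    rw [hΘ, hΘ, hcomp]
    exact le_of_lt (by simpa [Real.dist_eq, abs_sub_comm] using hOo n o ho (θ a x))
  exact lt_of_le_of_lt hd hn
end

section
/- Let X be a pseudocompact space and G a semitopological group which is a k-space, and let θ : G × X → X be a continuous action. Then θ extends to a continuous action θ̃ : G × βX → βX on the Stone–Čech compactification βX. -/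
open Set Filter Topology

/-- In a pseudocompact completely regular space, every sequence of nonempty open sets has a
cluster point: a point every neighborhood of which meets infinitely many of the sets. -/
private lemma cluster_of_pseudocompact {X : Type*} [TopologicalSpace X] [T35Space X]
    (hpc : ∀ f : X → ℝ, Continuous f → ∃ M : ℝ, ∀ x : X, |f x| ≤ M)
    (B : ℕ → Set X) (hBo : ∀ n, IsOpen (B n)) (hBne : ∀ n, (B n).Nonempty) :
    ∃ z : X, ∀ U ∈ 𝓝 z, {n | (B n ∩ U).Nonempty}.Infinite := by
  by_contra hcon
  push_neg at hcon
  have hlf : LocallyFinite B := by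
    intro x
    obtain ⟨U, hU, hfin⟩ := hcon x
    exact ⟨U, hU, hfin⟩
  choose b hb using hBne
  have hreg : ∀ n, ∃ f : X → unitInterval, Continuous f ∧ f (b n) = 0 ∧ EqOn f 1 (B n)ᶜ :=
    fun n => CompletelyRegularSpace.completely_regular (b n) (B n)ᶜ
      (hBo n).isClosed_compl (fun h => h (hb n))
  choose fs hfsc hfs0 hfs1 using hreg
  set φ : ℕ → X → ℝ := fun n x => (n : ℝ) * (1 - (fs n x : ℝ)) with hφ
  have hφc : ∀ n, Continuous (φ n) :=
    fun n => continuous_const.mul (continuous_const.sub (continuous_subtype_val.comp (hfsc n)))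
  have hφnonneg : ∀ n x, 0 ≤ φ n x := by
    intro n x
    have h2 := (fs n x).2
    rw [Set.mem_Icc] at h2
    have h3 : (0:ℝ) ≤ 1 - (fs n x : ℝ) := by linarith [h2.2]
    exact mul_nonneg (Nat.cast_nonneg n) h3
  have hφsupp : ∀ n, Function.support (φ n) ⊆ B n := by
    intro n x hx
    by_contra hxB
    have h1 : fs n x = 1 := hfs1 n hxB
    apply hx
    simp [hφ, h1]
  have hF : Continuous fun x => ∑ᶠ n, φ n x :=
    continuous_finsum hφc (hlf.subset hφsupp)
  obtain ⟨M, hM⟩ := hpc _ hF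
  obtain ⟨n, hn⟩ := exists_nat_gt M
  have hptfin : (Function.support fun m => φ m (b n)).Finite := by
    apply (hlf.point_finite (b n)).subset
    intro m hm
    exact hφsupp m hm
  have h1 : φ n (b n) ≤ ∑ᶠ m, φ m (b n) :=
    single_le_finsum n hptfin (fun m => hφnonneg m (b n))
  have h2 : φ n (b n) = (n : ℝ) := by
    simp [hφ, hfs0 n]
  have h3 := hM (b n)
  have h4 : ∑ᶠ m, φ m (b n) ≤ M := le_trans (le_abs_self _) h3
  rw [h2] at h1
  linarith

/-- Equicontinuity at a point of a jointly continuous family indexed by a compact space. -/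
private lemma equicont_of_compact {K X : Type*} [TopologicalSpace K] [TopologicalSpace X]
    [CompactSpace K] (g : K → X → ℝ) (hg : Continuous fun p : K × X => g p.1 p.2)
    (x₀ : X) {δ : ℝ} (hδ : 0 < δ) :
    ∃ B : Set X, IsOpen B ∧ x₀ ∈ B ∧ ∀ k, ∀ x ∈ B, |g k x - g k x₀| < δ := by
  have h1 : ∀ k : K, ∃ (A : Set K) (C : Set X), IsOpen A ∧ IsOpen C ∧ k ∈ A ∧ x₀ ∈ C ∧
      ∀ k' ∈ A, ∀ x ∈ C, |g k' x - g k x₀| < δ / 2 := by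
    intro k
    have hS : IsOpen {p : K × X | |g p.1 p.2 - g k x₀| < δ / 2} := by
      have hc : Continuous fun p : K × X => |g p.1 p.2 - g k x₀| :=
        (hg.sub continuous_const).abs
      exact isOpen_lt hc continuous_const
    have hmem : (k, x₀) ∈ {p : K × X | |g p.1 p.2 - g k x₀| < δ / 2} := by
      simp only [mem_setOf_eq, sub_self, abs_zero]
      linarith
    obtain ⟨A, C, hA, hC, hkA, hx₀C, hsub⟩ := isOpen_prod_iff.mp hS k x₀ hmem
    exact ⟨A, C, hA, hC, hkA, hx₀C, fun k' hk' x hx => hsub (Set.mk_mem_prod hk' hx)⟩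
  choose A C hAo hCo hkA hx₀C hprop using h1
  obtain ⟨t, ht⟩ := isCompact_univ.elim_finite_subcover A hAo
    (fun k _ => mem_iUnion.mpr ⟨k, hkA k⟩)
  refine ⟨⋂ k ∈ t, C k, isOpen_biInter_finset (fun k _ => hCo k),
    mem_iInter₂.mpr (fun k _ => hx₀C k), ?_⟩
  intro k x hx
  obtain ⟨k', hk't, hkA'⟩ := mem_iUnion₂.mp (ht (mem_univ k))
  have hxC : x ∈ C k' := mem_iInter₂.mp hx k' hk't
  have e1 : |g k x - g k' x₀| < δ / 2 := hprop k' k hkA' x hxC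
  have e2 : |g k x₀ - g k' x₀| < δ / 2 := hprop k' k hkA' x₀ (hx₀C k')
  calc |g k x - g k x₀| ≤ |g k x - g k' x₀| + |g k' x₀ - g k x₀| := abs_sub_le _ _ _
    _ < δ / 2 + δ / 2 := by
        rw [abs_sub_comm (g k' x₀) (g k x₀)]
        linarith
    _ = δ := by ring

/-- The key Glicksberg-type lemma: if `K` is compact, `X` pseudocompact Tychonoff, and
`g : K × X → ℝ` is jointly continuous and vanishes identically on the slice `{k₀} × X`,
then `g` is uniformly small on `U × X` for some neighborhood `U` of `k₀`. -/
private lemma key_lemma {K X : Type*} [TopologicalSpace K] [TopologicalSpace X]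
    [CompactSpace K] [T35Space X]
    (hpc : ∀ f : X → ℝ, Continuous f → ∃ M : ℝ, ∀ x : X, |f x| ≤ M)
    (g : K → X → ℝ) (hg : Continuous fun p : K × X => g p.1 p.2)
    (k₀ : K) (h0 : ∀ x, g k₀ x = 0) {ε : ℝ} (hε : 0 < ε) :
    ∃ U ∈ 𝓝 k₀, ∀ k ∈ U, ∀ x, |g k x| ≤ ε := by
  by_contra hcon
  push_neg at hcon
  -- Build sequences (kₙ, xₙ) with |g kₙ xₙ| > ε and |g kₙ xₘ| < ε/4 for m < n.
  have hseq : ∃ q : ℕ → K × X, (∀ n, ε < |g (q n).1 (q n).2|) ∧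
      ∀ m n, m < n → |g (q n).1 (q m).2| < ε / 4 := by
    apply exists_seq_of_forall_finset_exists (fun p : K × X => ε < |g p.1 p.2|)
      (fun p p' => |g p'.1 p.2| < ε / 4)
    intro s _
    have hUo : IsOpen (⋂ p ∈ s, {k : K | |g k p.2| < ε / 4}) := by
      apply isOpen_biInter_finset
      intro p _
      have hc : Continuous fun k : K => |g k p.2| :=
        ((hg.comp (continuous_id.prodMk continuous_const)) : Continuous fun k : K => g k p.2).abs
      exact isOpen_lt hc continuous_const
    have hk₀U : k₀ ∈ ⋂ p ∈ s, {k : K | |g k p.2| < ε / 4} := by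
      refine mem_iInter₂.mpr (fun p _ => ?_)
      simp only [mem_setOf_eq, h0, abs_zero]
      linarith
    obtain ⟨k, hkU, x, hx⟩ := hcon _ (hUo.mem_nhds hk₀U)
    exact ⟨(k, x), hx, fun p hp => mem_iInter₂.mp hkU p hp⟩
  obtain ⟨q, hP, hr⟩ := hseq
  -- Equicontinuity neighborhoods around each xₙ.
  have heq : ∀ n, ∃ B : Set X, IsOpen B ∧ (q n).2 ∈ B ∧
      ∀ k, ∀ x ∈ B, |g k x - g k (q n).2| < ε / 8 :=
    fun n => equicont_of_compact g hg (q n).2 (by linarith)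
  choose O hOo hOmem hOprop using heq
  -- Cluster point of the sequence of open sets.
  obtain ⟨z, hz⟩ := cluster_of_pseudocompact hpc O hOo (fun n => ⟨(q n).2, hOmem n⟩)
  -- A cluster point k̄ in K compatible with z.
  set T : Set X → ℕ → Set K :=
    fun U N => (fun n => (q n).1) '' {n | N ≤ n ∧ (O n ∩ U).Nonempty} with hT
  have hfip : ∀ u : Finset ({U : Set X // U ∈ 𝓝 z} × ℕ),
      (Set.univ ∩ ⋂ i ∈ u, closure (T i.1.1 i.2)).Nonempty := by
    intro u
    have hU' : (⋂ i ∈ u, (i.1.1 : Set X)) ∈ 𝓝 z :=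
      (Filter.biInter_finset_mem u).mpr (fun i _ => i.1.2)
    have hinf := hz _ hU'
    obtain ⟨n, hnS, hngt⟩ := hinf.exists_gt (u.sup Prod.snd)
    refine ⟨(q n).1, mem_univ _, mem_iInter₂.mpr (fun i hi => subset_closure ?_)⟩
    refine ⟨n, ⟨?_, ?_⟩, rfl⟩
    · exact le_trans (Finset.le_sup hi) hngt.le
    · exact hnS.mono (inter_subset_inter_right _ (iInter₂_subset i hi))
  have hnonempty : (⋂ i : {U : Set X // U ∈ 𝓝 z} × ℕ, closure (T i.1.1 i.2)).Nonempty := by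
    by_contra hemp
    rw [Set.not_nonempty_iff_eq_empty] at hemp
    obtain ⟨u, hu⟩ := isCompact_univ.elim_finite_subfamily_closed
      (fun i : {U : Set X // U ∈ 𝓝 z} × ℕ => closure (T i.1.1 i.2))
      (fun _ => isClosed_closure) (by rw [hemp]; simp)
    exact absurd (hfip u) (by rw [hu]; simp)
  obtain ⟨kk, hkk⟩ := hnonempty
  have hkmem : ∀ (U : Set X), U ∈ 𝓝 z → ∀ N : ℕ, kk ∈ closure (T U N) :=
    fun U hU N => mem_iInter.mp hkk ⟨⟨U, hU⟩, N⟩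
  -- (a) |g k̄ xₙ| ≤ ε/4 for all n.
  have ha : ∀ n, |g kk (q n).2| ≤ ε / 4 := by
    intro n
    have h1 : kk ∈ closure (T univ (n + 1)) := hkmem univ univ_mem (n + 1)
    have hcl : IsClosed {k : K | |g k (q n).2| ≤ ε / 4} := by
      have hc : Continuous fun k : K => |g k (q n).2| :=
        ((hg.comp (continuous_id.prodMk continuous_const)) : Continuous fun k : K => g k (q n).2).abs
      exact isClosed_le hc continuous_const
    have hsub : T univ (n + 1) ⊆ {k : K | |g k (q n).2| ≤ ε / 4} := by
      rintro _ ⟨m, ⟨hm, _⟩, rfl⟩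
      exact (hr n m (Nat.lt_of_succ_le hm)).le
    exact hcl.closure_subset_iff.mpr hsub h1
  -- (b) |g k̄ z| ≤ 3ε/8.
  have hb : |g kk z| ≤ ε / 4 + ε / 8 := by
    have hzc : z ∈ closure (⋃ n, O n) := by
      rw [mem_closure_iff_nhds]
      intro U hU
      obtain ⟨n, hn⟩ := (hz U hU).nonempty
      obtain ⟨x, hxO, hxU⟩ := hn
      exact ⟨x, hxU, mem_iUnion.mpr ⟨n, hxO⟩⟩
    have hcl : IsClosed {x : X | |g kk x| ≤ ε / 4 + ε / 8} := by
      have hc : Continuous fun x : X => |g kk x| :=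
        ((hg.comp (continuous_const.prodMk continuous_id)) : Continuous fun x : X => g kk x).abs
      exact isClosed_le hc continuous_const
    have hsub : (⋃ n, O n) ⊆ {x : X | |g kk x| ≤ ε / 4 + ε / 8} := by
      rintro x hx
      obtain ⟨n, hxn⟩ := mem_iUnion.mp hx
      have h5 := hOprop n kk x hxn
      have h6 := ha n
      have h7 := abs_sub_abs_le_abs_sub (g kk x) (g kk (q n).2)
      simp only [mem_setOf_eq]
      linarith
    exact hcl.closure_subset_iff.mpr hsub hzc
  -- (c) |g k̄ z| > 3ε/4 : contradiction.
  have hSo : IsOpen {p : K × X | |g p.1 p.2 - g kk z| < ε / 8} :=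
    isOpen_lt ((hg.sub continuous_const).abs) continuous_const
  have hSm : (kk, z) ∈ {p : K × X | |g p.1 p.2 - g kk z| < ε / 8} := by
    simp only [mem_setOf_eq, sub_self, abs_zero]
    linarith
  obtain ⟨A, U, hAo, hUo, hkA, hzU, hAU⟩ := isOpen_prod_iff.mp hSo kk z hSm
  have hU : U ∈ 𝓝 z := hUo.mem_nhds hzU
  have h1 : kk ∈ closure (T U 0) := hkmem U hU 0
  obtain ⟨_, hA', hmemT⟩ := (mem_closure_iff_nhds.mp h1) A (hAo.mem_nhds hkA)
  obtain ⟨m, ⟨_, hOne⟩, rfl⟩ := hmemT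
  obtain ⟨x', hx'O, hx'U⟩ := hOne
  have h5 : |g (q m).1 x' - g kk z| < ε / 8 := hAU (Set.mk_mem_prod hA' hx'U)
  have h6 : |g (q m).1 x' - g (q m).1 (q m).2| < ε / 8 := hOprop m (q m).1 x' hx'O
  have h7 := hP m
  have h8 := abs_sub_abs_le_abs_sub (g (q m).1 (q m).2) (g (q m).1 x')
  have h9 := abs_sub_abs_le_abs_sub (g (q m).1 x') (g kk z)
  rw [abs_sub_comm] at h6
  linarith

/-- Maps out of a k-space are continuous as soon as their restrictions to all compacts are. -/
private lemma kspace_continuous {G M : Type*} [TopologicalSpace G] [TopologicalSpace M]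
    (hk : ∀ s : Set G, (∀ K : Set G, IsCompact K → IsClosed ((Subtype.val ⁻¹' s) : Set K)) →
      IsClosed s)
    (Ψ : G → M) (h : ∀ K : Set G, IsCompact K → Continuous fun k : K => Ψ k) :
    Continuous Ψ := by
  rw [continuous_iff_isClosed]
  intro S hS
  apply hk
  intro K hK
  exact IsClosed.preimage (h K hK) hS

/-- A map into a compact Hausdorff space is continuous iff all compositions with real-valued
continuous functions are continuous. -/
private lemma continuous_of_tests {Z Y : Type*} [TopologicalSpace Z] [TopologicalSpace Y]
    [CompactSpace Y] [T2Space Y] (φ : Z → Y)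
    (h : ∀ f : Y → ℝ, Continuous f → Continuous fun z => f (φ z)) : Continuous φ := by
  rw [continuous_iff_isClosed]
  intro C hC
  rw [← isOpen_compl_iff, isOpen_iff_mem_nhds]
  intro z hz
  have hd : Disjoint C {φ z} := Set.disjoint_singleton_right.mpr hz
  obtain ⟨f, hf0, hf1, -⟩ := exists_continuous_zero_one_of_isClosed hC isClosed_singleton hd
  have hopen : IsOpen {w : Z | (1 : ℝ) / 2 < f (φ w)} :=
    isOpen_lt continuous_const (h f f.continuous)
  have hmem : z ∈ {w : Z | (1 : ℝ) / 2 < f (φ w)} := by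
    have : f (φ z) = 1 := hf1 rfl
    simp only [mem_setOf_eq, this]
    norm_num
  refine Filter.mem_of_superset (hopen.mem_nhds hmem) ?_
  intro w hw hwC
  have : f (φ w) = 0 := hf0 hwC
  simp only [mem_setOf_eq, this] at hw
  norm_num at hw

/-- A continuous action of a semitopological group `G` which is a k-space
on a pseudocompact (Tychonoff) space `X` extends to a continuous action on the
Stone–Čech compactification `βX`. -/
theorem action_extends_to_stoneCech {G X : Type*} [Group G] [TopologicalSpace G]
    [TopologicalSpace X] [T35Space X]
    (hmul_left : ∀ g : G, Continuous fun h : G => g * h)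
    (hmul_right : ∀ g : G, Continuous fun h : G => h * g)
    -- `G` is a k-space
    (hk : ∀ s : Set G, (∀ K : Set G, IsCompact K → IsClosed ((Subtype.val ⁻¹' s) : Set K)) →
      IsClosed s)
    -- `X` is pseudocompact
    (hpc : ∀ f : X → ℝ, Continuous f → ∃ M : ℝ, ∀ x : X, |f x| ≤ M)
    (θ : G → X → X)
    (hone : ∀ x : X, θ 1 x = x)
    (hcomp : ∀ (g h : G) (x : X), θ (g * h) x = θ g (θ h x))
    (hcont : Continuous fun p : G × X => θ p.1 p.2) :
    ∃ θ' : G → StoneCech X → StoneCech X,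
      (∀ (g : G) (x : X), θ' g (stoneCechUnit x) = stoneCechUnit (θ g x)) ∧
      (∀ y : StoneCech X, θ' 1 y = y) ∧
      (∀ (g h : G) (y : StoneCech X), θ' (g * h) y = θ' g (θ' h y)) ∧
      Continuous fun p : G × StoneCech X => θ' p.1 p.2 := by
  -- The extension of each translation.
  have hce : ∀ g : G, Continuous fun x : X => stoneCechUnit (θ g x) :=
    fun g => continuous_stoneCechUnit.comp (hcont.comp (Continuous.prodMk_right g))
  have hext : ∀ (g : G) (x : X),
      stoneCechExtend (hce g) (stoneCechUnit x) = stoneCechUnit (θ g x) :=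
    fun g x => congrFun (stoneCechExtend_extends (hce g)) x
  refine ⟨fun g => stoneCechExtend (hce g), ?_, ?_, ?_, ?_⟩
  · exact hext
  · -- identity
    have : stoneCechExtend (hce 1) = id := by
      apply stoneCech_hom_ext (continuous_stoneCechExtend _) continuous_id
      funext x
      simp only [Function.comp_apply, id_eq]
      rw [hext 1 x, hone x]
    intro y
    show stoneCechExtend (hce 1) y = y
    rw [this]; rfl
  · -- composition
    intro g h
    have : stoneCechExtend (hce (g * h)) =
        (stoneCechExtend (hce g)) ∘ (stoneCechExtend (hce h)) := by
      apply stoneCech_hom_ext (continuous_stoneCechExtend _)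
        ((continuous_stoneCechExtend _).comp (continuous_stoneCechExtend _))
      funext x
      simp only [Function.comp_apply]
      rw [hext (g * h) x, hext h x, hext g (θ h x), hcomp g h x]
    intro y
    show stoneCechExtend (hce (g * h)) y =
      stoneCechExtend (hce g) (stoneCechExtend (hce h) y)
    rw [this]; rfl
  · -- joint continuity
    apply continuous_of_tests
    intro f hf
    -- curried map into C(βX, ℝ)
    set Φ : G → C(StoneCech X, ℝ) :=
      fun g => ⟨fun y => f (stoneCechExtend (hce g) y), hf.comp (continuous_stoneCechExtend _)⟩
      with hΦ
    have hΦapp : ∀ (g : G) (y : StoneCech X), Φ g y = f (stoneCechExtend (hce g) y) :=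
      fun g y => rfl
    have hΦcont : Continuous Φ := by
      apply kspace_continuous hk
      intro K hK
      haveI : CompactSpace K := isCompact_iff_compactSpace.mp hK
      rw [continuous_iff_continuousAt]
      intro k₀
      rw [ContinuousAt, Metric.tendsto_nhds]
      intro ε hε
      -- apply the key lemma on K
      set gg : K → X → ℝ :=
        fun k x => f (stoneCechUnit (θ (k : G) x)) - f (stoneCechUnit (θ (k₀ : G) x)) with hgg
      have hggc : Continuous fun p : K × X => gg p.1 p.2 := by
        have hc1 : Continuous fun p : K × X => f (stoneCechUnit (θ (p.1 : G) p.2)) :=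
          hf.comp (continuous_stoneCechUnit.comp (hcont.comp
            ((continuous_subtype_val.comp continuous_fst).prodMk continuous_snd)))
        have hc2 : Continuous fun p : K × X => f (stoneCechUnit (θ (k₀ : G) p.2)) :=
          hf.comp (continuous_stoneCechUnit.comp (hcont.comp
            (continuous_const.prodMk continuous_snd)))
        exact hc1.sub hc2
      have hgg0 : ∀ x, gg k₀ x = 0 := fun x => sub_self _
      obtain ⟨U, hU, hUprop⟩ := key_lemma hpc gg hggc k₀ hgg0 (half_pos hε)
      filter_upwards [hU] with k hkU
      have hdist : dist (Φ (k : G)) (Φ (k₀ : G)) ≤ ε / 2 := by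
        rw [ContinuousMap.dist_le (by linarith)]
        intro y
        -- prove on the dense range and extend by continuity
        have hclosed : IsClosed {y : StoneCech X |
            dist (Φ (k : G) y) (Φ (k₀ : G) y) ≤ ε / 2} := by
          have hc : Continuous fun y : StoneCech X => dist (Φ (k : G) y) (Φ (k₀ : G) y) :=
            ((Φ (k : G)).continuous.dist (Φ (k₀ : G)).continuous)
          exact isClosed_le hc continuous_const
        have hrange : Set.range (stoneCechUnit : X → StoneCech X) ⊆
            {y : StoneCech X | dist (Φ (k : G) y) (Φ (k₀ : G) y) ≤ ε / 2} := by
          rintro _ ⟨x, rfl⟩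
          have e1 : Φ (k : G) (stoneCechUnit x) = f (stoneCechUnit (θ (k : G) x)) := by
            rw [hΦapp, hext (k : G) x]
          have e2 : Φ (k₀ : G) (stoneCechUnit x) = f (stoneCechUnit (θ (k₀ : G) x)) := by
            rw [hΦapp, hext (k₀ : G) x]
          simp only [mem_setOf_eq, e1, e2, Real.dist_eq]
          exact hUprop k hkU x
        have hdense : closure (Set.range (stoneCechUnit : X → StoneCech X)) = Set.univ :=
          denseRange_stoneCechUnit.closure_range
        have : (Set.univ : Set (StoneCech X)) ⊆
            {y : StoneCech X | dist (Φ (k : G) y) (Φ (k₀ : G) y) ≤ ε / 2} := by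
          rw [← hdense]
          exact hclosed.closure_subset_iff.mpr hrange
        exact this (mem_univ y)
      calc dist (Φ (k : G)) (Φ (k₀ : G)) ≤ ε / 2 := hdist
        _ < ε := by linarith
    -- assemble joint continuity from the curried map and evaluation
    have : (fun p : G × StoneCech X => f (stoneCechExtend (hce p.1) p.2)) =
        fun p : G × StoneCech X => Φ p.1 p.2 := rfl
    rw [this]
    exact (hΦcont.comp continuous_fst).eval continuous_snd
end

section
/- Let G be a topological group acting separately continuously and transitively on a Baire space X. If G is ω-narrow, then every orbit map θ^x : G → X is nearly open, i.e., θ^x(U) ⊆ Int(cl(θ^x(U))) for every open U ⊆ G. -/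
open Pointwise

/-- For a separately continuous transitive action of an ω-narrow
topological group `G` on a Baire space `X`, every orbit map `g ↦ θ g x` is nearly open. -/
theorem orbitMap_nearlyOpen {G X : Type*} [Group G] [TopologicalSpace G] [IsTopologicalGroup G]
    [TopologicalSpace X] [BaireSpace X]
    -- `G` is ω-narrow
    (hnarrow : ∀ U ∈ nhds (1 : G), ∃ A : Set G, A.Countable ∧ U * A = Set.univ)
    (θ : G → X → X)
    (hone : ∀ x : X, θ 1 x = x)
    (hcomp : ∀ (g h : G) (x : X), θ (g * h) x = θ g (θ h x))
    (hsep₁ : ∀ g : G, Continuous (θ g))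
    (hsep₂ : ∀ x : X, Continuous fun g : G => θ g x)
    (htrans : ∀ x : X, Function.Surjective fun g : G => θ g x)
    (x : X) :
    ∀ U : Set G, IsOpen U →
      (fun g : G => θ g x) '' U ⊆ interior (closure ((fun g : G => θ g x) '' U)) := by
  set f : G → X := fun g => θ g x with hf
  -- every translation is a homeomorphism
  have hhomeo : ∀ h : G, ∀ S : Set X,
      θ h '' closure S = closure (θ h '' S) ∧ θ h '' interior S = interior (θ h '' S) := by
    intro h S
    let φ : X ≃ₜ X :=
      { toFun := θ h
        invFun := θ h⁻¹
        left_inv := fun y => by rw [← hcomp, inv_mul_cancel, hone]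
        right_inv := fun y => by rw [← hcomp, mul_inv_cancel, hone]
        continuous_toFun := hsep₁ h
        continuous_invFun := hsep₁ h⁻¹ }
    exact ⟨φ.image_closure S, φ.image_interior S⟩
  -- main step: for every open neighborhood `W` of `1`, `x ∈ int cl (f '' W)`.
  have main : ∀ W : Set G, IsOpen W → (1 : G) ∈ W → x ∈ interior (closure (f '' W)) := by
    intro W hWopen hW1
    obtain ⟨V, hVopen, hV1, hVV⟩ :=
      exists_open_nhds_one_mul_subset (hWopen.mem_nhds hW1)
    set V' : Set G := V ∩ V⁻¹ with hV'def
    have hV'open : IsOpen V' := hVopen.inter hVopen.inv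
    have hV'1 : (1 : G) ∈ V' := ⟨hV1, by simp [hV1]⟩
    obtain ⟨A, hAcount, hAcover⟩ :=
      hnarrow V'⁻¹ (hV'open.inv.mem_nhds (by simpa using hV'1))
    haveI : Countable ↥A := hAcount.to_subtype
    haveI : Nonempty X := ⟨x⟩
    -- the translates `θ_{a⁻¹}(f '' V')` cover `X`
    set F : ↥A → Set X := fun a => closure (f '' ((fun v => (a : G)⁻¹ * v) '' V')) with hFdef
    have hFclosed : ∀ a : ↥A, IsClosed (F a) := fun a => isClosed_closure
    have hFcover : (⋃ a : ↥A, F a) = Set.univ := by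
      apply Set.eq_univ_of_forall
      intro y
      obtain ⟨h, hh⟩ := htrans x y
      have hmem : h⁻¹ ∈ V'⁻¹ * A := by rw [hAcover]; trivial
      obtain ⟨v, hv, a, ha, hva⟩ := Set.mem_mul.mp hmem
      have hhval : h = a⁻¹ * v⁻¹ := by
        have : h = (v * a)⁻¹ := by rw [hva, inv_inv]
        simpa [mul_inv_rev] using this
      refine Set.mem_iUnion.mpr ⟨⟨a, ha⟩, subset_closure ?_⟩
      refine ⟨a⁻¹ * v⁻¹, ⟨v⁻¹, ?_, rfl⟩, by rw [← hhval]; exact hh⟩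
      simpa using hv
    obtain ⟨a, z, hz⟩ := nonempty_interior_of_iUnion_of_closed hFclosed hFcover
    -- rewrite `F a` as a translate of `closure (f '' V')`
    have himg : f '' ((fun v => (a : G)⁻¹ * v) '' V') = θ (a : G)⁻¹ '' (f '' V') := by
      rw [Set.image_image, Set.image_image]
      exact Set.image_congr' (fun v => hcomp _ _ _)
    have hzin : z ∈ θ (a : G)⁻¹ '' interior (closure (f '' V')) := by
      rw [(hhomeo (a : G)⁻¹ (closure (f '' V'))).2]
      have hFa : F a = θ (a : G)⁻¹ '' closure (f '' V') := by
        show closure (f '' ((fun v => (a : G)⁻¹ * v) '' V')) = _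
        rw [himg, ← (hhomeo (a : G)⁻¹ (f '' V')).1]
      exact hFa ▸ hz
    obtain ⟨w, hw, -⟩ := hzin
    -- `int cl (f '' V')` is nonempty open inside `cl (f '' V')`, so it meets `f '' V'`
    have hwcl : w ∈ closure (f '' V') := interior_subset hw
    obtain ⟨p, hp1, hp2⟩ :=
      (mem_closure_iff.mp hwcl) (interior (closure (f '' V'))) isOpen_interior hw
    obtain ⟨v, hvV', hvp⟩ := hp2
    -- translate back by `v⁻¹`
    have hx : x = θ v⁻¹ (f v) := by
      rw [hf]; rw [← hcomp, inv_mul_cancel, hone]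
    have hxin : x ∈ interior (closure (θ v⁻¹ '' (f '' V'))) := by
      have hmem : x ∈ θ v⁻¹ '' interior (closure (f '' V')) :=
        ⟨f v, by rw [hvp]; exact hp1, hx.symm⟩
      rw [(hhomeo v⁻¹ (closure (f '' V'))).2] at hmem
      rwa [(hhomeo v⁻¹ (f '' V')).1] at hmem
    have himg2 : θ v⁻¹ '' (f '' V') = f '' ((fun w' => v⁻¹ * w') '' V') := by
      rw [Set.image_image, Set.image_image]
      exact Set.image_congr' (fun w' => (hcomp _ _ _).symm)
    have hsub : (fun w' => v⁻¹ * w') '' V' ⊆ W := by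
      rintro _ ⟨w', hw', rfl⟩
      exact hVV ⟨v⁻¹, hvV'.2, w', hw'.1, rfl⟩
    have := interior_mono (closure_mono (Set.image_mono (f := f) hsub))
    rw [himg2] at hxin
    exact this hxin
  -- conclude
  intro U hU
  rintro _ ⟨g, hgU, rfl⟩
  have hW : IsOpen ((fun u => g⁻¹ * u) '' U) := by
    have : (fun u => g⁻¹ * u) '' U = (Homeomorph.mulLeft g⁻¹) '' U := rfl
    rw [this]
    exact (Homeomorph.mulLeft g⁻¹).isOpenMap U hU
  have h1W : (1 : G) ∈ (fun u => g⁻¹ * u) '' U := ⟨g, hgU, by simp⟩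
  have hx := main _ hW h1W
  have himg : θ g '' (f '' ((fun u => g⁻¹ * u) '' U)) = f '' U := by
    rw [Set.image_image, Set.image_image]
    exact Set.image_congr' (fun u => by
      show θ g (θ (g⁻¹ * u) x) = θ u x
      rw [← hcomp, mul_inv_cancel_left])
  have hmem : θ g x ∈ θ g '' interior (closure (f '' ((fun u => g⁻¹ * u) '' U))) :=
    ⟨x, hx, rfl⟩
  rw [(hhomeo g _).2] at hmem
  rw [(hhomeo g _).1, himg] at hmem
  exact hmem
end

section
/- Let X be a pseudocompact submetrizable Tychonoff space. Then X is a compact metrizable space. -/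
open Set Filter Topology unitInterval

/-- In a pseudocompact Tychonoff space, a decreasing sequence of nonempty open sets has a
common closure point. -/
lemma aux_cluster_pt {X : Type*} [TopologicalSpace X] [T35Space X]
    (hpc : ∀ f : X → ℝ, Continuous f → ∃ M : ℝ, ∀ x : X, |f x| ≤ M)
    (V : ℕ → Set X) (hopen : ∀ n, IsOpen (V n)) (hne : ∀ n, (V n).Nonempty)
    (hdec : Antitone V) : (⋂ n, closure (V n)).Nonempty := by
  by_contra hcon
  rw [Set.not_nonempty_iff_eq_empty] at hcon
  choose p hp using hne
  have hreg : ∀ n, ∃ g : X → I, Continuous g ∧ g (p n) = 0 ∧ EqOn g 1 (V n)ᶜ := fun n =>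
    CompletelyRegularSpace.completely_regular (p n) (V n)ᶜ (hopen n).isClosed_compl
      (by simpa using hp n)
  choose g hgc hgp hgK using hreg
  set h : ℕ → X → ℝ := fun n x => n * (1 - (g n x : ℝ)) with hh
  have hhc : ∀ n, Continuous (h n) := fun n =>
    continuous_const.mul (continuous_const.sub (continuous_subtype_val.comp (hgc n)))
  have hnonneg : ∀ n x, 0 ≤ h n x := by
    intro n x
    have h1 : (g n x : ℝ) ≤ 1 := (g n x).2.2
    have : (0:ℝ) ≤ n := n.cast_nonneg
    simp only [hh]
    nlinarith
  have hzero : ∀ n x, x ∉ V n → h n x = 0 := by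
    intro n x hx
    have : g n x = 1 := hgK n hx
    simp [hh, this]
  have hhp : ∀ n, h n (p n) = n := by
    intro n; simp [hh, hgp n]
  have hloc : ∀ x : X, ∃ N : ℕ, ∃ W : Set X, IsOpen W ∧ x ∈ W ∧
      ∀ y ∈ W, ∀ n, N ≤ n → h n y = 0 := by
    intro x
    have hx : x ∉ ⋂ n, closure (V n) := by simp [hcon]
    rw [mem_iInter] at hx
    push_neg at hx
    obtain ⟨N, hN⟩ := hx
    refine ⟨N, (closure (V N))ᶜ, isClosed_closure.isOpen_compl, hN, fun y hy n hn =>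
      hzero n y fun hyv => hy (subset_closure (hdec hn hyv))⟩
  set F : X → ℝ := fun x => ∑' n, h n x with hF
  have hFeq : ∀ (N : ℕ) (y : X), (∀ n, N ≤ n → h n y = 0) →
      F y = ∑ n ∈ Finset.range N, h n y := by
    intro N y hy
    exact tsum_eq_sum (fun n hn => hy n (Nat.le_of_not_lt (fun h => hn (Finset.mem_range.mpr h))))
  have hFc : Continuous F := by
    rw [continuous_iff_continuousAt]
    intro x
    obtain ⟨N, W, hWo, hxW, hW⟩ := hloc x
    have hev : ∀ᶠ y in 𝓝 x, (fun y => ∑ n ∈ Finset.range N, h n y) y = F y :=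
      eventually_of_mem (hWo.mem_nhds hxW) (fun y hy => (hFeq N y (hW y hy)).symm)
    exact ContinuousAt.congr ((continuous_finset_sum _ fun n _ => hhc n).continuousAt) hev
  obtain ⟨M, hM⟩ := hpc F hFc
  obtain ⟨n, hn⟩ := exists_nat_gt M
  have hsumm : Summable (fun m => h m (p n)) := by
    obtain ⟨N, W, hWo, hxW, hW⟩ := hloc (p n)
    exact summable_of_ne_finset_zero (s := Finset.range N)
      (fun m hm => hW _ hxW m (Nat.le_of_not_lt (fun h => hm (Finset.mem_range.mpr h))))
  have hle : (n : ℝ) ≤ F (p n) := by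
    calc (n : ℝ) = h n (p n) := (hhp n).symm
      _ ≤ F (p n) := Summable.le_tsum hsumm n (fun m _ => hnonneg m (p n))
  have := abs_le.mp (hM (p n))
  linarith [this.2]

/-- A pseudocompact submetrizable Tychonoff space is compact and
metrizable. -/
theorem pseudocompact_submetrizable_compact_metrizable {X : Type u} [TopologicalSpace X]
    [T35Space X]
    -- `X` is pseudocompact
    (hpc : ∀ f : X → ℝ, Continuous f → ∃ M : ℝ, ∀ x : X, |f x| ≤ M)
    -- `X` is submetrizable: it admits a continuous injection into a metrizable space
    (hsub : ∃ (M : Type u) (_ : MetricSpace M) (f : X → M),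
      Continuous f ∧ Function.Injective f) :
    CompactSpace X ∧ TopologicalSpace.MetrizableSpace X := by
  obtain ⟨M, _, f, hf, hinj⟩ := hsub
  -- Step 1: every open set contains a metric `f`-ball around each of its points.
  have key : ∀ U : Set X, IsOpen U → ∀ x ∈ U, ∃ ε > 0, ∀ y, dist (f y) (f x) < ε → y ∈ U := by
    intro U hU x hx
    by_contra hcon
    push_neg at hcon
    obtain ⟨g, hgc, hgx, hgK⟩ := CompletelyRegularSpace.completely_regular x Uᶜ
      hU.isClosed_compl (by simpa using hx)
    set W : ℕ → Set X :=
      fun n => {y | (1:ℝ)/2 < (g y : ℝ)} ∩ {y | dist (f y) (f x) < 1/(n+1)} with hW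
    have hgcr : Continuous fun y => (g y : ℝ) := continuous_subtype_val.comp hgc
    have hdcr : Continuous fun y => dist (f y) (f x) := (hf.dist continuous_const)
    have hWo : ∀ n, IsOpen (W n) :=
      fun n => (isOpen_lt continuous_const hgcr).inter (isOpen_lt hdcr continuous_const)
    have hWne : ∀ n, (W n).Nonempty := by
      intro n
      obtain ⟨y, hy1, hy2⟩ := hcon (1/(n+1)) (by positivity)
      refine ⟨y, ?_, hy1⟩
      have : g y = 1 := hgK hy2
      simp [this]
      norm_num
    have hWanti : Antitone W := by
      apply antitone_nat_of_succ_le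
      intro n y hy
      refine ⟨hy.1, show dist (f y) (f x) < 1/(n+1) from lt_of_lt_of_le hy.2 ?_⟩
      apply one_div_le_one_div_of_le (by positivity)
      push_cast; linarith
    obtain ⟨z, hz⟩ := aux_cluster_pt hpc W hWo hWne hWanti
    rw [mem_iInter] at hz
    have h1 : ∀ n : ℕ, dist (f z) (f x) ≤ 1/(n+1) := by
      intro n
      have hsub : closure (W n) ⊆ {y | dist (f y) (f x) ≤ 1/(n+1)} :=
        closure_minimal (fun y hy => show dist (f y) (f x) ≤ 1/(n+1) from le_of_lt hy.2)
          (isClosed_le hdcr continuous_const)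
      exact hsub (hz n)
    have hzx : z = x := by
      have hd0 : dist (f z) (f x) ≤ 0 := by
        refine le_of_forall_pos_le_add ?_
        intro ε hε
        obtain ⟨n, hn⟩ := exists_nat_one_div_lt hε
        calc dist (f z) (f x) ≤ 1/(n+1) := h1 n
          _ ≤ ε := by push_cast at hn ⊢; linarith
          _ ≤ 0 + ε := by linarith
      exact hinj (dist_le_zero.mp hd0)
    have h2 : (1:ℝ)/2 ≤ (g z : ℝ) := by
      have hsub : closure (W 0) ⊆ {y | (1:ℝ)/2 ≤ (g y : ℝ)} :=
        closure_minimal (fun y hy => show (1:ℝ)/2 ≤ (g y : ℝ) from le_of_lt hy.1)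
          (isClosed_le continuous_const hgcr)
      exact hsub (hz 0)
    rw [hzx, hgx] at h2
    norm_num at h2
  -- Step 2: `f` is an embedding.
  have heq : ‹TopologicalSpace X› = TopologicalSpace.induced f inferInstance := by
    refine le_antisymm (continuous_iff_le_induced.mp hf) ?_
    refine le_of_nhds_le_nhds ?_
    intro x
    rw [nhds_induced]
    intro U hU
    obtain ⟨U', hU'sub, hU'open, hxU'⟩ := mem_nhds_iff.mp hU
    obtain ⟨ε, hε, hball⟩ := key U' hU'open x hxU'
    exact Filter.mem_comap.mpr ⟨Metric.ball (f x) ε, Metric.ball_mem_nhds _ hε,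
      fun y hy => hU'sub (hball y (by simpa [Metric.mem_ball] using hy))⟩
  have hemb : Topology.IsEmbedding f := ⟨⟨heq⟩, hinj⟩
  have hmetr : TopologicalSpace.MetrizableSpace X := hemb.metrizableSpace
  -- Step 3: compactness via sequential compactness for the pulled-back metric.
  letI : MetricSpace X := hemb.comapMetricSpace f
  have hseq : SeqCompactSpace X := by
    constructor
    intro u hu
    set V : ℕ → Set X := fun n => ⋃ m, ⋃ _ : n ≤ m, Metric.ball (u m) (1/(n+1)) with hV
    have hVo : ∀ n, IsOpen (V n) :=
      fun n => isOpen_iUnion fun m => isOpen_iUnion fun _ => Metric.isOpen_ball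
    have hVne : ∀ n, (V n).Nonempty := by
      intro n
      exact ⟨u n, mem_iUnion.mpr ⟨n, mem_iUnion.mpr ⟨le_refl n,
        Metric.mem_ball_self (by positivity)⟩⟩⟩
    have hVanti : Antitone V := by
      apply antitone_nat_of_succ_le
      intro n y hy
      simp only [hV, mem_iUnion] at hy
      obtain ⟨m, hm, hym⟩ := hy
      refine mem_iUnion.mpr ⟨m, mem_iUnion.mpr ⟨le_trans (Nat.le_succ n) hm, ?_⟩⟩
      rw [Metric.mem_ball] at hym ⊢
      refine lt_of_lt_of_le hym ?_
      apply one_div_le_one_div_of_le (by positivity)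
      push_cast; linarith
    obtain ⟨z, hz⟩ := aux_cluster_pt hpc V hVo hVne hVanti
    rw [mem_iInter] at hz
    have hcl : MapClusterPt z atTop u := by
      rw [mapClusterPt_iff_frequently]
      intro s hs
      obtain ⟨ε, hε, hball⟩ := Metric.mem_nhds_iff.mp hs
      rw [frequently_atTop]
      intro N
      obtain ⟨n0, hn0⟩ := exists_nat_one_div_lt (half_pos hε)
      set n := max N n0 with hn
      have hrad : (1:ℝ)/(n+1) < ε/2 := by
        refine lt_of_le_of_lt ?_ hn0
        apply one_div_le_one_div_of_le (by positivity)
        have : (n0:ℝ) ≤ n := by exact_mod_cast le_max_right N n0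
        linarith
      have hzcl := hz n
      obtain ⟨y, hyV, hyb⟩ := Metric.mem_closure_iff.mp hzcl (ε/2) (half_pos hε)
      simp only [hV, mem_iUnion] at hyV
      obtain ⟨m, hm, hym⟩ := hyV
      rw [Metric.mem_ball] at hym
      refine ⟨m, le_trans (le_max_left N n0) hm, hball ?_⟩
      rw [Metric.mem_ball]
      calc dist (u m) z ≤ dist (u m) y + dist y z := dist_triangle _ _ _
        _ < 1/(n+1) + ε/2 := by
            rw [dist_comm] at hyb
            exact add_lt_add (by rw [dist_comm]; exact hym) hyb
        _ < ε/2 + ε/2 := by linarith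
        _ = ε := by ring
    obtain ⟨φ, hφ, htend⟩ := TopologicalSpace.FirstCountableTopology.tendsto_subseq hcl
    exact ⟨z, mem_univ z, φ, hφ, htend⟩
  exact ⟨compactSpace_iff_seqCompactSpace.mpr hseq, hmetr⟩
end
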